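/- Let P = (S, 𝓛) be a thick nondegenerate embeddable polar space of rank at least 3, let W be a proper subspace of P contained in some hyperplane of P, and let K, L be two distinct proper lines of D(P, W) with K ∥ L. Then there is a finite sequence Π₁, …, Πₙ of planes of D(P, W) such that the common point K^∞ = L^∞ lies in the closure of each Πᵢ, K ⊆ Π₁, L ⊆ Πₙ, and Πⱼ and Πⱼ₊₁ share a line of D(P, W) for each j = 1, …, n−1. -/

import Mathlib

namespace PolarComp

variable {S : Type*}

/-- A partial linear space: every line has at least two points, and two
distinct lines share at most one point. -/
def IsPLS (𝓛 : Set (Set S)) : Prop :=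
  (∀ l ∈ 𝓛, ∃ a b : S, a ≠ b ∧ a ∈ l ∧ b ∈ l) ∧
  (∀ l ∈ 𝓛, ∀ m ∈ 𝓛, l ≠ m → ∀ a b : S, a ∈ l ∩ m → b ∈ l ∩ m → a = b)

/-- Thick: every line has at least three points. -/
def Thick (𝓛 : Set (Set S)) : Prop :=
  ∀ l ∈ 𝓛, ∃ a b c : S, a ≠ b ∧ a ≠ c ∧ b ≠ c ∧ a ∈ l ∧ b ∈ l ∧ c ∈ l

/-- Two points are collinear iff they lie on a common line (every point is
collinear with itself). -/
def Collin (𝓛 : Set (Set S)) (a b : S) : Prop :=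
  a = b ∨ ∃ l ∈ 𝓛, a ∈ l ∧ b ∈ l

/-- Nondegenerate: no point is collinear with all other points. -/
def Nondegenerate (𝓛 : Set (Set S)) : Prop :=
  ∀ a : S, ∃ b : S, ¬ Collin 𝓛 a b

/-- The one-or-all axiom: a point off a line is collinear with exactly one or
with all points of the line. -/
def OneOrAll (𝓛 : Set (Set S)) : Prop :=
  ∀ l ∈ 𝓛, ∀ a : S, a ∉ l →
    (∃! b, b ∈ l ∧ Collin 𝓛 a b) ∨ (∀ b ∈ l, Collin 𝓛 a b)

/-- A polar space is a partial linear space satisfying the one-or-all axiom. -/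
def IsPolarSpace (𝓛 : Set (Set S)) : Prop := IsPLS 𝓛 ∧ OneOrAll 𝓛

/-- A subspace: contains every line meeting it in at least two points. -/
def IsSubspace (𝓛 : Set (Set S)) (X : Set S) : Prop :=
  ∀ l ∈ 𝓛, (∃ a ∈ l ∩ X, ∃ b ∈ l ∩ X, a ≠ b) → l ⊆ X

/-- A hyperplane: a proper subspace meeting every line. -/
def IsHyperplane (𝓛 : Set (Set S)) (X : Set S) : Prop :=
  IsSubspace 𝓛 X ∧ X ≠ Set.univ ∧ ∀ l ∈ 𝓛, (l ∩ X).Nonempty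

/-- A singular set: any two of its points are collinear. -/
def SingularSet (𝓛 : Set (Set S)) (X : Set S) : Prop :=
  ∀ a ∈ X, ∀ b ∈ X, Collin 𝓛 a b

/-- Rank at least `n`: there is a strictly increasing chain of `n` nonempty
singular subspaces. -/
def RankAtLeast (𝓛 : Set (Set S)) (n : ℕ) : Prop :=
  ∃ X : Fin n → Set S, StrictMono X ∧
    ∀ i, (X i).Nonempty ∧ SingularSet 𝓛 (X i) ∧ IsSubspace 𝓛 (X i)

/-- `perp 𝓛 a` is the set of points collinear with `a`. -/
def perp (𝓛 : Set (Set S)) (a : S) : Set S := {b | Collin 𝓛 a b}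

/-- The radical of `X`: `X ∩ X^⊥`. -/
def radSet (𝓛 : Set (Set S)) (X : Set S) : Set S :=
  X ∩ {a | ∀ b ∈ X, Collin 𝓛 a b}

/-- The lines of the complement `D(P, W)`. -/
def compLines (𝓛 : Set (Set S)) (W : Set S) : Set (Set S) :=
  {K | ∃ k ∈ 𝓛, ¬ k ⊆ W ∧ K = k \ W}

/-- Two proper lines are parallel iff their closures meet in `W`. -/
def Parallel (𝓛 : Set (Set S)) (W : Set S) (K L : Set S) : Prop :=
  ∃ k ∈ 𝓛, ∃ l ∈ 𝓛, ¬ k ⊆ W ∧ ¬ l ⊆ W ∧ K = k \ W ∧ L = l \ W ∧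
    (k ∩ l ∩ W).Nonempty

/-- A proper line is affine iff its closure meets `W`. -/
def IsAffineLine (𝓛 : Set (Set S)) (W : Set S) (K : Set S) : Prop :=
  ∃ k ∈ 𝓛, ¬ k ⊆ W ∧ K = k \ W ∧ (k ∩ W).Nonempty

/-- `AtInfinity 𝓛 W K a` says that `a = K^∞`, i.e. `a` is a point of `K̄ ∩ W`. -/
def AtInfinity (𝓛 : Set (Set S)) (W : Set S) (K : Set S) (a : S) : Prop :=
  ∃ k ∈ 𝓛, ¬ k ⊆ W ∧ K = k \ W ∧ a ∈ k ∩ W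

/-- A deep point of `W`: a point of `W` which is `L^∞` for no affine line `L`. -/
def IsDeepPoint (𝓛 : Set (Set S)) (W : Set S) (a : S) : Prop :=
  a ∈ W ∧ ∀ K : Set S, ¬ AtInfinity 𝓛 W K a

/-- A plane: a minimal singular subspace containing a given line and a given
point not on that line. -/
def IsPlane (𝓛 : Set (Set S)) (X : Set S) : Prop :=
  ∃ l ∈ 𝓛, ∃ a : S, a ∉ l ∧ a ∈ X ∧ l ⊆ X ∧
    SingularSet 𝓛 X ∧ IsSubspace 𝓛 X ∧
    ∀ Y : Set S, SingularSet 𝓛 Y → IsSubspace 𝓛 Y → l ⊆ Y → a ∈ Y → Y ⊆ X → Y = X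

/-- `Π^∞`: the points at infinity of a plane of the complement with closure `Pl`. -/
def planeInfinity (𝓛 : Set (Set S)) (W : Set S) (Pl : Set S) : Set S :=
  {a | ∃ M : Set S, IsAffineLine 𝓛 W M ∧ M ⊆ Pl \ W ∧ AtInfinity 𝓛 W M a}

/-- A deep line: an improper line `L ⊆ W` which is `Π^∞` for no plane of the
complement. -/
def IsDeepLine (𝓛 : Set (Set S)) (W : Set S) (L : Set S) : Prop :=
  L ∈ 𝓛 ∧ L ⊆ W ∧
    ∀ Pl : Set S, IsPlane 𝓛 Pl → ¬ Pl ⊆ W → planeInfinity 𝓛 W Pl ≠ L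

/-- The relation `∥*` on proper lines of the complement. -/
def ParStar (𝓛 : Set (Set S)) (W : Set S) (K₁ K₂ : Set S) : Prop :=
  K₁ ∈ compLines 𝓛 W ∧ K₂ ∈ compLines 𝓛 W ∧ K₁ ∩ K₂ = ∅ ∧
    ∃ L₁ ∈ compLines 𝓛 W, ∃ L₂ ∈ compLines 𝓛 W, L₁ ≠ L₂ ∧
      (L₁ ∩ L₂).Nonempty ∧ (L₁ ∩ K₁).Nonempty ∧ (L₁ ∩ K₂).Nonempty ∧
      (L₂ ∩ K₁).Nonempty ∧ (L₂ ∩ K₂).Nonempty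

/-- `∥ᵗ`: the transitive closure of `∥*`. -/
def ParT (𝓛 : Set (Set S)) (W : Set S) : Set S → Set S → Prop :=
  Relation.TransGen (ParStar 𝓛 W)

/-- The anti-euclidean relation `~` on affine lines: `K₁ ~ K₂` iff no affine
line through a point of `K₁` is parallel to `K₂`. -/
def Tilde (𝓛 : Set (Set S)) (W : Set S) (K₁ K₂ : Set S) : Prop :=
  ∀ a ∈ K₁, ∀ M : Set S, IsAffineLine 𝓛 W M → a ∈ M → ¬ Parallel 𝓛 W M K₂

/-- `[K₁] ≡ [K₂]`: `M ~ N` and `N ~ M` for all `M ∥ K₁` and `N ∥ K₂`. -/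
def EquivCls (𝓛 : Set (Set S)) (W : Set S) (K₁ K₂ : Set S) : Prop :=
  ∀ M N : Set S, IsAffineLine 𝓛 W M → IsAffineLine 𝓛 W N →
    Parallel 𝓛 W M K₁ → Parallel 𝓛 W N K₂ → Tilde 𝓛 W M N ∧ Tilde 𝓛 W N M

/-- The parallel class of an affine line. -/
def parClass (𝓛 : Set (Set S)) (W : Set S) (L : Set S) : Set (Set S) :=
  {M | IsAffineLine 𝓛 W M ∧ Parallel 𝓛 W M L}

/-- The class of affine lines with point at infinity `w`. -/
def classAt (𝓛 : Set (Set S)) (W : Set S) (w : S) : Set (Set S) :=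
  {L | IsAffineLine 𝓛 W L ∧ AtInfinity 𝓛 W L w}

/-- A witness that the polar space embeds in a projective space `ℙ(F, V)`. -/
structure EmbeddingWitness (𝓛 : Set (Set S)) where
  F : Type
  [iF : DivisionRing F]
  V : Type
  [iV : AddCommGroup V]
  [iM : Module F V]
  f : S → Projectivization F V
  inj : Function.Injective f
  spanning : ∀ T : Submodule F V, (∀ s : S, Projectivization.submodule (f s) ≤ T) → T = ⊤
  lines2dim : ∀ l ∈ 𝓛, ∃ U : Submodule F V, Module.finrank F ↥U = 2 ∧
    f '' l = {p | ∃ v : V, ∃ hv : v ≠ 0, v ∈ U ∧ p = Projectivization.mk F v hv}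

/-- An embeddable polar space. -/
def Embeddable (𝓛 : Set (Set S)) : Prop := Nonempty (EmbeddingWitness 𝓛)


section Aux

variable {𝓛 : Set (Set S)}

lemma collin_refl (a : S) : Collin 𝓛 a a := Or.inl rfl

lemma collin_symm {a b : S} (h : Collin 𝓛 a b) : Collin 𝓛 b a := by
  rcases h with h | ⟨l, hl, ha, hb⟩
  · exact Or.inl h.symm
  · exact Or.inr ⟨l, hl, hb, ha⟩

lemma collin_of_mem {l : Set S} (hl : l ∈ 𝓛) {a b : S} (ha : a ∈ l) (hb : b ∈ l) :
    Collin 𝓛 a b := Or.inr ⟨l, hl, ha, hb⟩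

lemma line_exists {a b : S} (h : Collin 𝓛 a b) (hne : a ≠ b) :
    ∃ l ∈ 𝓛, a ∈ l ∧ b ∈ l := by
  rcases h with h | h
  · exact absurd h hne
  · exact h

lemma line_unique (hp : IsPLS 𝓛) {l m : Set S} (hl : l ∈ 𝓛) (hm : m ∈ 𝓛)
    {a b : S} (hab : a ≠ b) (hal : a ∈ l) (ham : a ∈ m) (hbl : b ∈ l) (hbm : b ∈ m) :
    l = m := by
  by_contra hne
  exact hab (hp.2 l hl m hm hne a b ⟨hal, ham⟩ ⟨hbl, hbm⟩)

/-- A point of a line different from two given points. -/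
lemma line_third (ht : Thick 𝓛) {l : Set S} (hl : l ∈ 𝓛) (x y : S) :
    ∃ z ∈ l, z ≠ x ∧ z ≠ y := by
  obtain ⟨a, b, c, hab, hac, hbc, ha, hb, hc⟩ := ht l hl
  by_cases hax : a = x <;> by_cases hay : a = y <;>
    by_cases hbx : b = x <;> by_cases hby : b = y <;>
    first
      | exact ⟨a, ha, hax, hay⟩
      | exact ⟨b, hb, hbx, hby⟩
      | (refine ⟨c, hc, ?_, ?_⟩ <;> (intro h; subst h; simp_all))

/-- B7 : every point is collinear with some point of any line. -/
lemma exists_collin_on_line (hp : IsPLS 𝓛) (hoa : OneOrAll 𝓛) {l : Set S} (hl : l ∈ 𝓛)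
    (x : S) : ∃ z ∈ l, Collin 𝓛 x z := by
  by_cases hx : x ∈ l
  · exact ⟨x, hx, collin_refl x⟩
  rcases hoa l hl x hx with ⟨b, ⟨hb, hcb⟩, _⟩ | hall
  · exact ⟨b, hb, hcb⟩
  · obtain ⟨a, b, _, ha, _⟩ := hp.1 l hl
    exact ⟨a, ha, hall a ha⟩

/-- B2 : collinear with two points of a line implies collinear with all of it. -/
lemma collin_line_all (hoa : OneOrAll 𝓛) {l : Set S} (hl : l ∈ 𝓛) {x c d : S}
    (hc : c ∈ l) (hd : d ∈ l) (hcd : c ≠ d) (hxc : Collin 𝓛 x c) (hxd : Collin 𝓛 x d) :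
    ∀ e ∈ l, Collin 𝓛 x e := by
  intro e he
  by_cases hx : x ∈ l
  · exact collin_of_mem hl hx he
  rcases hoa l hl x hx with ⟨b, _, huniq⟩ | hall
  · exact absurd ((huniq c ⟨hc, hxc⟩).trans (huniq d ⟨hd, hxd⟩).symm) hcd
  · exact hall e he

lemma perp_subspace (hoa : OneOrAll 𝓛) (p : S) : IsSubspace 𝓛 (perp 𝓛 p) := by
  rintro l hl ⟨a, ⟨hal, hap⟩, b, ⟨hbl, hbp⟩, hab⟩ e he
  exact collin_line_all hoa hl hal hbl hab hap hbp e he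

lemma subspace_line_inter {W : Set S} (hWs : IsSubspace 𝓛 W) {l : Set S} (hl : l ∈ 𝓛)
    (hnW : ¬ l ⊆ W) {x y : S} (hx : x ∈ l) (hxW : x ∈ W) (hy : y ∈ l) (hyW : y ∈ W) :
    x = y := by
  by_contra hne
  exact hnW (hWs l hl ⟨x, ⟨hx, hxW⟩, y, ⟨hy, hyW⟩, hne⟩)

/-! ### Closure -/

/-- One step of the subspace closure. -/
def clstep (𝓛 : Set (Set S)) (A : Set S) : Set S :=
  A ∪ ⋃₀ {l | l ∈ 𝓛 ∧ ∃ a ∈ l ∩ A, ∃ b ∈ l ∩ A, a ≠ b}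

def cln (𝓛 : Set (Set S)) (A : Set S) : ℕ → Set S
  | 0 => A
  | n+1 => clstep 𝓛 (cln 𝓛 A n)

/-- The subspace closure of a set. -/
def pcl (𝓛 : Set (Set S)) (A : Set S) : Set S := ⋃ n, cln 𝓛 A n

lemma subset_clstep (A : Set S) : A ⊆ clstep 𝓛 A := Set.subset_union_left

lemma cln_mono {A : Set S} {n m : ℕ} (h : n ≤ m) : cln 𝓛 A n ⊆ cln 𝓛 A m := by
  induction m with
  | zero => simp_all
  | succ m ih =>
    rcases Nat.lt_or_ge n (m+1) with h' | h'
    · exact (ih (Nat.lt_succ_iff.mp h')).trans (subset_clstep _)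
    · have : n = m + 1 := le_antisymm h h'
      subst this; exact subset_refl _

lemma subset_pcl (A : Set S) : A ⊆ pcl 𝓛 A :=
  fun x hx => Set.mem_iUnion.mpr ⟨0, hx⟩

lemma pcl_subspace (A : Set S) : IsSubspace 𝓛 (pcl 𝓛 A) := by
  rintro l hl ⟨a, ⟨hal, haP⟩, b, ⟨hbl, hbP⟩, hab⟩
  obtain ⟨i, hi⟩ := Set.mem_iUnion.mp haP
  obtain ⟨j, hj⟩ := Set.mem_iUnion.mp hbP
  have hiM : cln 𝓛 A i ⊆ cln 𝓛 A (max i j) := cln_mono (le_max_left _ _)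
  have hjM : cln 𝓛 A j ⊆ cln 𝓛 A (max i j) := cln_mono (le_max_right _ _)
  intro e he
  refine Set.mem_iUnion.mpr ⟨max i j + 1, Or.inr ?_⟩
  exact ⟨l, ⟨hl, a, ⟨hal, hiM hi⟩, b, ⟨hbl, hjM hj⟩, hab⟩, he⟩

lemma pcl_min {A Y : Set S} (hY : IsSubspace 𝓛 Y) (hAY : A ⊆ Y) : pcl 𝓛 A ⊆ Y := by
  have key : ∀ n, cln 𝓛 A n ⊆ Y := by
    intro n
    induction n with
    | zero => exact hAY
    | succ n ih =>
      rintro x (hx | ⟨l, ⟨hl, a, ⟨hal, haC⟩, b, ⟨hbl, hbC⟩, hab⟩, hxl⟩)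
      · exact ih hx
      · exact hY l hl ⟨a, ⟨hal, ih haC⟩, b, ⟨hbl, ih hbC⟩, hab⟩ hxl
  intro x hx
  obtain ⟨n, hn⟩ := Set.mem_iUnion.mp hx
  exact key n hn

lemma clstep_singular (hoa : OneOrAll 𝓛) {A : Set S} (hA : SingularSet 𝓛 A) :
    SingularSet 𝓛 (clstep 𝓛 A) := by
  have aux : ∀ u ∈ A, ∀ v ∈ clstep 𝓛 A, Collin 𝓛 u v := by
    rintro u hu v (hv | ⟨l, ⟨hl, a, ⟨hal, haA⟩, b, ⟨hbl, hbA⟩, hab⟩, hvl⟩)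
    · exact hA u hu v hv
    · exact collin_line_all hoa hl hal hbl hab (hA u hu a haA) (hA u hu b hbA) v hvl
  rintro u (hu | ⟨l, ⟨hl, a, ⟨hal, haA⟩, b, ⟨hbl, hbA⟩, hab⟩, hul⟩) v hv
  · exact aux u hu v hv
  · rcases hv with hv | ⟨m, ⟨hm, c, ⟨hcm, hcA⟩, d, ⟨hdm, hdA⟩, hcd⟩, hvm⟩
    · exact collin_symm (aux v hv u (Or.inr ⟨l, ⟨hl, a, ⟨hal, haA⟩, b, ⟨hbl, hbA⟩, hab⟩, hul⟩))
    · -- u on l (2 pts of A), v on m (2 pts of A)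
      have hcu : Collin 𝓛 c u :=
        collin_line_all hoa hl hal hbl hab (hA c hcA a haA) (hA c hcA b hbA) u hul
      have hdu : Collin 𝓛 d u :=
        collin_line_all hoa hl hal hbl hab (hA d hdA a haA) (hA d hdA b hbA) u hul
      exact collin_line_all hoa hm hcm hdm hcd (collin_symm hcu) (collin_symm hdu) v hvm

lemma pcl_singular (hoa : OneOrAll 𝓛) {A : Set S} (hA : SingularSet 𝓛 A) :
    SingularSet 𝓛 (pcl 𝓛 A) := by
  have key : ∀ n, SingularSet 𝓛 (cln 𝓛 A n) := by
    intro n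
    induction n with
    | zero => exact hA
    | succ n ih => exact clstep_singular hoa ih
  intro u hu v hv
  obtain ⟨i, hi⟩ := Set.mem_iUnion.mp hu
  obtain ⟨j, hj⟩ := Set.mem_iUnion.mp hv
  exact key (max i j) u (cln_mono (le_max_left _ _) hi) v (cln_mono (le_max_right _ _) hj)

end Aux
section Aux2

variable {𝓛 : Set (Set S)}

lemma exists_ne_on_line (hp : IsPLS 𝓛) {l : Set S} (hl : l ∈ 𝓛) (s : S) :
    ∃ b ∈ l, b ≠ s := by
  obtain ⟨x, y, hxy, hx, hy⟩ := hp.1 l hl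
  by_cases hxs : x = s
  · exact ⟨y, hy, fun h => hxy (hxs.trans h.symm)⟩
  · exact ⟨x, hx, hxs⟩

/-- The plane generated by two distinct mutually collinear lines through a common point. -/
lemma adj_plane (hp : IsPLS 𝓛) (hoa : OneOrAll 𝓛) {m₁ m₂ : Set S} (hm₁ : m₁ ∈ 𝓛)
    (hm₂ : m₂ ∈ 𝓛) {a : S} (ha₁ : a ∈ m₁) (ha₂ : a ∈ m₂) (hne : m₁ ≠ m₂)
    (hadj : ∀ u ∈ m₁, ∀ v ∈ m₂, Collin 𝓛 u v) :
    IsPlane 𝓛 (pcl 𝓛 (m₁ ∪ m₂)) := by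
  have hsing : SingularSet 𝓛 (m₁ ∪ m₂) := by
    rintro u (hu | hu) v (hv | hv)
    · exact collin_of_mem hm₁ hu hv
    · exact hadj u hu v hv
    · exact collin_symm (hadj v hv u hu)
    · exact collin_of_mem hm₂ hu hv
  obtain ⟨u₂, hu₂, hu₂a⟩ := exists_ne_on_line hp hm₂ a
  have hu₂m₁ : u₂ ∉ m₁ := by
    intro hmem
    exact hne (line_unique hp hm₁ hm₂ (Ne.symm hu₂a) ha₁ ha₂ hmem hu₂)
  refine ⟨m₁, hm₁, u₂, hu₂m₁, subset_pcl _ (Or.inr hu₂),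
    fun z hz => subset_pcl _ (Or.inl hz), pcl_singular hoa hsing, pcl_subspace _, ?_⟩
  intro Y hYs hYsub hm₁Y hu₂Y hYpcl
  have hm₂Y : m₂ ⊆ Y :=
    hYsub m₂ hm₂ ⟨a, ⟨ha₂, hm₁Y ha₁⟩, u₂, ⟨hu₂, hu₂Y⟩, Ne.symm hu₂a⟩
  exact le_antisymm hYpcl (pcl_min hYsub (Set.union_subset hm₁Y hm₂Y))

/-- Lemma E: the perp of any point meets a "plane-ish" singular subspace in a line. -/
lemma lemmaE (hp : IsPLS 𝓛) (hoa : OneOrAll 𝓛) {X : Set S} (hsing : SingularSet 𝓛 X)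
    (hsub : IsSubspace 𝓛 X) {m₀ : Set S} (hm₀ : m₀ ∈ 𝓛) (hm₀X : m₀ ⊆ X) {p₃ : S}
    (hp₃X : p₃ ∈ X) (hp₃ : p₃ ∉ m₀) (q : S) :
    ∃ n ∈ 𝓛, n ⊆ X ∧ ∀ e ∈ n, Collin 𝓛 q e := by
  by_cases hXq : ∀ e ∈ X, Collin 𝓛 q e
  · exact ⟨m₀, hm₀, hm₀X, fun e he => hXq e (hm₀X he)⟩
  push_neg at hXq
  obtain ⟨z, hzX, hzq⟩ := hXq
  by_cases h2 : ∃ c ∈ X, ∃ d ∈ X, c ≠ d ∧ Collin 𝓛 q c ∧ Collin 𝓛 q d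
  · obtain ⟨c, hcX, d, hdX, hcd, hqc, hqd⟩ := h2
    obtain ⟨n, hn, hcn, hdn⟩ := line_exists (hsing c hcX d hdX) hcd
    have hnX : n ⊆ X := hsub n hn ⟨c, ⟨hcn, hcX⟩, d, ⟨hdn, hdX⟩, hcd⟩
    exact ⟨n, hn, hnX, fun e he => collin_line_all hoa hn hcn hdn hcd hqc hqd e he⟩
  push_neg at h2
  exfalso
  obtain ⟨s, hsm₀, hqs⟩ := exists_collin_on_line hp hoa hm₀ q
  obtain ⟨b, hbm₀, hbs⟩ := exists_ne_on_line hp hm₀ s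
  have hcol : Collin 𝓛 p₃ b := hsing p₃ hp₃X b (hm₀X hbm₀)
  have hp₃b : p₃ ≠ b := fun h => hp₃ (h ▸ hbm₀)
  obtain ⟨n', hn', hp₃n', hbn'⟩ := line_exists hcol hp₃b
  have hn'X : n' ⊆ X := hsub n' hn' ⟨p₃, ⟨hp₃n', hp₃X⟩, b, ⟨hbn', hm₀X hbm₀⟩, hp₃b⟩
  obtain ⟨t, htn', hqt⟩ := exists_collin_on_line hp hoa hn' q
  have hts : t = s := by
    by_contra hne
    exact h2 t (hn'X htn') s (hm₀X hsm₀) hne hqt hqs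
  subst hts
  have : n' = m₀ := line_unique hp hn' hm₀ hbs hbn' hbm₀ htn' hsm₀
  exact hp₃ (this ▸ hp₃n')

/-- From the rank hypothesis: a singular subspace containing a line and an extra point. -/
lemma rank_flag (hp : IsPLS 𝓛) (hrank : RankAtLeast 𝓛 3) :
    ∃ X : Set S, SingularSet 𝓛 X ∧ IsSubspace 𝓛 X ∧
      ∃ m₀ ∈ 𝓛, m₀ ⊆ X ∧ ∃ p₃ ∈ X, p₃ ∉ m₀ := by
  obtain ⟨X, hmono, hX⟩ := hrank
  have h01 : X 0 < X 1 := hmono (by decide : (0 : Fin 3) < 1)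
  have h12 : X 1 < X 2 := hmono (by decide : (1 : Fin 3) < 2)
  obtain ⟨p₁, hp₁⟩ := (hX 0).1
  obtain ⟨p₂, hp₂1, hp₂0⟩ := Set.exists_of_ssubset h01
  obtain ⟨p₃, hp₃2, hp₃1⟩ := Set.exists_of_ssubset h12
  have hp₁1 : p₁ ∈ X 1 := h01.le hp₁
  have hne : p₁ ≠ p₂ := fun h => hp₂0 (h ▸ hp₁)
  obtain ⟨m₀, hm₀, h1m, h2m⟩ := line_exists ((hX 1).2.1 p₁ hp₁1 p₂ hp₂1) hne
  have hm₀X1 : m₀ ⊆ X 1 := (hX 1).2.2 m₀ hm₀ ⟨p₁, ⟨h1m, hp₁1⟩, p₂, ⟨h2m, hp₂1⟩, hne⟩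
  exact ⟨X 2, (hX 2).2.1, (hX 2).2.2, m₀, hm₀, hm₀X1.trans h12.le, p₃, hp₃2,
    fun h => hp₃1 (hm₀X1 h)⟩

lemma every_pt_on_line (hp : IsPLS 𝓛) (hoa : OneOrAll 𝓛) (hrank : RankAtLeast 𝓛 3)
    (x : S) : ∃ l ∈ 𝓛, x ∈ l := by
  obtain ⟨X, _, _, m₀, hm₀, _, _, _, _⟩ := rank_flag hp hrank
  by_cases hx : x ∈ m₀
  · exact ⟨m₀, hm₀, hx⟩
  obtain ⟨z, hzm₀, hxz⟩ := exists_collin_on_line hp hoa hm₀ x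
  have hne : x ≠ z := fun h => hx (h ▸ hzm₀)
  obtain ⟨l, hl, hxl, _⟩ := line_exists hxz hne
  exact ⟨l, hl, hxl⟩

/-- D2: for any two points there is a full line in the intersection of their perps,
contained in a plane-ish singular subspace inside the perp of the first point. -/
lemma common_perp_line (hp : IsPLS 𝓛) (hoa : OneOrAll 𝓛) (hrank : RankAtLeast 𝓛 3)
    (x y : S) :
    ∃ Y : Set S, SingularSet 𝓛 Y ∧ IsSubspace 𝓛 Y ∧ (∀ e ∈ Y, Collin 𝓛 x e) ∧
      (∃ m₁ ∈ 𝓛, m₁ ⊆ Y ∧ ∃ p₄ ∈ Y, p₄ ∉ m₁) ∧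
      ∃ n ∈ 𝓛, n ⊆ Y ∧ ∀ e ∈ n, Collin 𝓛 y e := by
  obtain ⟨X, hXs, hXsub, m₀, hm₀, hm₀X, p₃, hp₃X, hp₃m₀⟩ := rank_flag hp hrank
  by_cases hxX : x ∈ X
  · refine ⟨X, hXs, hXsub, fun e he => hXs x hxX e he, ⟨m₀, hm₀, hm₀X, p₃, hp₃X, hp₃m₀⟩, ?_⟩
    exact lemmaE hp hoa hXs hXsub hm₀ hm₀X hp₃X hp₃m₀ y
  · obtain ⟨n₁, hn₁, hn₁X, hn₁x⟩ := lemmaE hp hoa hXs hXsub hm₀ hm₀X hp₃X hp₃m₀ x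
    have hxn₁ : x ∉ n₁ := fun h => hxX (hn₁X h)
    set Y := pcl 𝓛 (n₁ ∪ {x}) with hY
    have hsing : SingularSet 𝓛 (n₁ ∪ {x}) := by
      rintro u (hu | hu) v (hv | hv)
      · exact collin_of_mem hn₁ hu hv
      · rw [Set.mem_singleton_iff] at hv; subst hv
        exact collin_symm (hn₁x u hu)
      · rw [Set.mem_singleton_iff] at hu; subst hu
        exact hn₁x v hv
      · rw [Set.mem_singleton_iff] at hu hv; subst hu; subst hv
        exact collin_refl _
    have hYs : SingularSet 𝓛 Y := pcl_singular hoa hsing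
    have hYsub : IsSubspace 𝓛 Y := pcl_subspace _
    have hxY : x ∈ Y := subset_pcl _ (Or.inr rfl)
    have hn₁Y : n₁ ⊆ Y := fun z hz => subset_pcl _ (Or.inl hz)
    refine ⟨Y, hYs, hYsub, fun e he => hYs x hxY e he, ⟨n₁, hn₁, hn₁Y, x, hxY, hxn₁⟩, ?_⟩
    exact lemmaE hp hoa hYs hYsub hn₁ hn₁Y hxY hxn₁ y

/-- RES-EX: every line has a point collinear with all of it lying outside it. -/
lemma exists_perp_off_line (hp : IsPLS 𝓛) (hoa : OneOrAll 𝓛) (hrank : RankAtLeast 𝓛 3)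
    {k : Set S} (hk : k ∈ 𝓛) :
    ∃ c, c ∉ k ∧ ∀ v ∈ k, Collin 𝓛 c v := by
  obtain ⟨x₁, x₂, hx12, hx₁, hx₂⟩ := hp.1 k hk
  obtain ⟨Y, hYs, hYsub, hYx, ⟨m₁, hm₁, hm₁Y, p₄, hp₄Y, hp₄m₁⟩, n, hn, hnY, hny⟩ :=
    common_perp_line hp hoa hrank x₁ x₂
  by_cases hnk : n ⊆ k
  · -- then n = k and k ⊆ Y ; take any point of Y off k
    obtain ⟨u, v, huv, hu, hv⟩ := hp.1 n hn
    have hnk' : n = k := line_unique hp hn hk huv hu (hnk hu) hv (hnk hv)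
    subst hnk'
    obtain ⟨c, hcY, hck⟩ : ∃ c ∈ Y, c ∉ n := by
      by_cases hm₁n : m₁ ⊆ n
      · obtain ⟨u', v', huv', hu', hv'⟩ := hp.1 m₁ hm₁
        have : m₁ = n := line_unique hp hm₁ hn huv' hu' (hm₁n hu') hv' (hm₁n hv')
        exact ⟨p₄, hp₄Y, fun h => hp₄m₁ (this ▸ h)⟩
      · obtain ⟨c, hcm₁, hcn⟩ := Set.not_subset.mp hm₁n
        exact ⟨c, hm₁Y hcm₁, hcn⟩
    exact ⟨c, hck, fun v hv => hYs c hcY v (hnY hv)⟩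
  · obtain ⟨c, hcn, hck⟩ := Set.not_subset.mp hnk
    have h1 : Collin 𝓛 c x₁ := collin_symm (hYx c (hnY hcn))
    have h2 : Collin 𝓛 c x₂ := collin_symm (hny c hcn)
    exact ⟨c, hck, fun v hv => collin_line_all hoa hk hx₁ hx₂ hx12 h1 h2 v hv⟩

end Aux2
section Emb

variable {𝓛 : Set (Set S)}

open Module Submodule in
/-- V1: two distinct lines inside the plane generated by two lines through a
common point must meet (via the projective embedding). -/
lemma lines_meet (hemb : Embeddable 𝓛) (hp : IsPLS 𝓛)
    {m₁ m₂ : Set S} (hm₁ : m₁ ∈ 𝓛) (hm₂ : m₂ ∈ 𝓛) {a : S} (ha₁ : a ∈ m₁) (ha₂ : a ∈ m₂)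
    {l₁ l₂ : Set S} (hl₁ : l₁ ∈ 𝓛) (hl₂ : l₂ ∈ 𝓛) (hne : l₁ ≠ l₂)
    (h1 : l₁ ⊆ pcl 𝓛 (m₁ ∪ m₂)) (h2 : l₂ ⊆ pcl 𝓛 (m₁ ∪ m₂)) :
    ∃ x, x ∈ l₁ ∧ x ∈ l₂ := by
  obtain ⟨E⟩ := hemb
  letI := E.iF; letI := E.iV; letI := E.iM
  obtain ⟨U₁, hU₁2, himg₁⟩ := E.lines2dim m₁ hm₁
  obtain ⟨U₂, hU₂2, himg₂⟩ := E.lines2dim m₂ hm₂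
  obtain ⟨Ul₁, hUl₁2, himgl₁⟩ := E.lines2dim l₁ hl₁
  obtain ⟨Ul₂, hUl₂2, himgl₂⟩ := E.lines2dim l₂ hl₂
  haveI fd1 : FiniteDimensional E.F U₁ := FiniteDimensional.of_finrank_pos (by omega)
  haveI fd2 : FiniteDimensional E.F U₂ := FiniteDimensional.of_finrank_pos (by omega)
  haveI fdl1 : FiniteDimensional E.F Ul₁ := FiniteDimensional.of_finrank_pos (by omega)
  haveI fdl2 : FiniteDimensional E.F Ul₂ := FiniteDimensional.of_finrank_pos (by omega)
  -- a representative of a point of a line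
  have getrep : ∀ (l : Set S) (U : Submodule E.F E.V),
      E.f '' l = {p | ∃ v : E.V, ∃ hv : v ≠ 0, v ∈ U ∧ p = Projectivization.mk E.F v hv} →
      ∀ s ∈ l, ∃ v : E.V, ∃ hv : v ≠ 0, v ∈ U ∧ E.f s = Projectivization.mk E.F v hv := by
    intro l U himg s hs
    have : E.f s ∈ E.f '' l := ⟨s, hs, rfl⟩
    rw [himg] at this
    exact this
  -- membership transfer along mk-equality
  have transfer : ∀ (U : Submodule E.F E.V) (v w : E.V) (hv : v ≠ 0) (hw : w ≠ 0),
      v ∈ U → Projectivization.mk E.F w hw = Projectivization.mk E.F v hv → w ∈ U := by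
    intro U v w hv hw hvU heq
    obtain ⟨c, hc⟩ := (Projectivization.mk_eq_mk_iff E.F w v hw hv).mp heq
    exact hc ▸ U.smul_mem _ hvU
  -- span of representatives of two distinct points of a line
  have span2 : ∀ (l : Set S) (U : Submodule E.F E.V), l ∈ 𝓛 → finrank E.F U = 2 →
      (E.f '' l = {p | ∃ v : E.V, ∃ hv : v ≠ 0, v ∈ U ∧ p = Projectivization.mk E.F v hv}) →
      ∀ s ∈ l, ∀ t ∈ l, s ≠ t →
      ∀ (vs vt : E.V) (hvs : vs ≠ 0) (hvt : vt ≠ 0), vs ∈ U → vt ∈ U →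
      E.f s = Projectivization.mk E.F vs hvs → E.f t = Projectivization.mk E.F vt hvt →
      span E.F {vs, vt} = U := by
    intro l U hlL hU2 himg s hs t ht hst vs vt hvs hvt hvsU hvtU hfs hft
    haveI : FiniteDimensional E.F U := FiniteDimensional.of_finrank_pos (by omega)
    have hind : LinearIndependent E.F ![vs, vt] := by
      rw [LinearIndependent.pair_iff]
      intro c d hcd
      by_cases hd : d = 0
      · subst hd
        refine ⟨?_, rfl⟩
        rw [zero_smul, add_zero] at hcd
        rcases smul_eq_zero.mp hcd with h | h
        · exact h
        · exact absurd h hvs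
      · exfalso
        have h1 : d • vt = -(c • vs) := eq_neg_of_add_eq_zero_right hcd
        have h2 : vt = (-(d⁻¹ * c)) • vs := by
          have := congrArg (fun z => d⁻¹ • z) h1
          simpa [smul_smul, inv_mul_cancel₀ hd, neg_smul, smul_neg] using this
        by_cases he : -(d⁻¹ * c) = 0
        · rw [he, zero_smul] at h2; exact hvt h2
        · have : Projectivization.mk E.F vt hvt = Projectivization.mk E.F vs hvs :=
            (Projectivization.mk_eq_mk_iff E.F vt vs hvt hvs).mpr
              ⟨Units.mk0 _ he, h2.symm⟩
          exact hst (E.inj (by rw [hfs, hft, this]))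
    have hle : span E.F {vs, vt} ≤ U := by
      rw [span_le]
      rintro v (rfl | rfl)
      · exact hvsU
      · exact hvtU
    have hrange : Set.range ![vs, vt] = {vs, vt} := by
      simp [Matrix.range_cons, Matrix.range_empty, Set.pair_comm]
    have hfr : finrank E.F (span E.F {vs, vt}) = 2 := by
      rw [← hrange, finrank_span_eq_card hind]
      simp
    exact eq_of_le_of_finrank_le hle (by rw [hU2, hfr])
  haveI fd3 : FiniteDimensional E.F ↥(U₁ ⊔ U₂) := by
    apply Submodule.finiteDimensional_sup
  -- the common point a gives a nonzero vector in U₁ ⊓ U₂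
  obtain ⟨va, hva0, hvaU₁, hfa⟩ := getrep m₁ U₁ himg₁ a ha₁
  obtain ⟨va', hva'0, hva'U₂, hfa'⟩ := getrep m₂ U₂ himg₂ a ha₂
  have hvaU₂ : va ∈ U₂ := transfer U₂ va' va hva'0 hva0 hva'U₂ (by rw [← hfa, hfa'])
  have htop3 : finrank E.F ↥(U₁ ⊔ U₂) ≤ 3 := by
    have hsum := Submodule.finrank_sup_add_finrank_inf_eq U₁ U₂
    haveI : FiniteDimensional E.F ↥(U₁ ⊓ U₂) :=
      Submodule.finiteDimensional_of_le (inf_le_left (b := U₂))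
    have hinf : 0 < finrank E.F ↥(U₁ ⊓ U₂) := by
      rw [Module.finrank_pos_iff]
      exact ⟨⟨va, hvaU₁, hvaU₂⟩, 0, by simp [Subtype.ext_iff, hva0]⟩
    rw [hU₁2, hU₂2] at hsum
    omega
  -- the linear hull is a polar subspace
  set Xlin : Set S :=
    {s | ∃ v : E.V, ∃ hv : v ≠ 0, v ∈ U₁ ⊔ U₂ ∧ E.f s = Projectivization.mk E.F v hv} with hXlin
  have hXsub : IsSubspace 𝓛 Xlin := by
    rintro l hl ⟨s, ⟨hsl, ws, hws0, hwsU, hfs⟩, t, ⟨htl, wt, hwt0, hwtU, hft⟩, hst⟩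
    obtain ⟨U, hU2, himg⟩ := E.lines2dim l hl
    obtain ⟨vs, hvs0, hvsU, hfs'⟩ := getrep l U himg s hsl
    obtain ⟨vt, hvt0, hvtU, hft'⟩ := getrep l U himg t htl
    have hwsU' : ws ∈ U := transfer U vs ws hvs0 hws0 hvsU (by rw [← hfs, hfs'])
    have hwtU' : wt ∈ U := transfer U vt wt hvt0 hwt0 hvtU (by rw [← hft, hft'])
    have hspan : span E.F {ws, wt} = U :=
      span2 l U hl hU2 himg s hsl t htl hst ws wt hws0 hwt0 hwsU' hwtU' hfs hft
    intro u hu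
    obtain ⟨vu, hvu0, hvuU, hfu⟩ := getrep l U himg u hu
    have hvu3 : vu ∈ (U₁ ⊔ U₂) := by
      have hsub3 : U ≤ (U₁ ⊔ U₂) := by
        rw [← hspan, span_le]
        rintro v (rfl | rfl)
        · exact hwsU
        · exact hwtU
      exact hsub3 hvuU
    exact ⟨vu, hvu0, hvu3, hfu⟩
  have hm₁X : m₁ ⊆ Xlin := by
    intro s hs
    obtain ⟨v, hv0, hvU, hfs⟩ := getrep m₁ U₁ himg₁ s hs
    exact ⟨v, hv0, le_sup_left (a := U₁) (b := U₂) hvU, hfs⟩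
  have hm₂X : m₂ ⊆ Xlin := by
    intro s hs
    obtain ⟨v, hv0, hvU, hfs⟩ := getrep m₂ U₂ himg₂ s hs
    exact ⟨v, hv0, le_sup_right (a := U₁) (b := U₂) hvU, hfs⟩
  have hpclX : pcl 𝓛 (m₁ ∪ m₂) ⊆ Xlin := pcl_min hXsub (Set.union_subset hm₁X hm₂X)
  -- both lines have their 2-dim subspaces inside (U₁ ⊔ U₂)
  have key : ∀ (l : Set S) (U : Submodule E.F E.V), l ∈ 𝓛 → finrank E.F U = 2 →
      (E.f '' l = {p | ∃ v : E.V, ∃ hv : v ≠ 0, v ∈ U ∧ p = Projectivization.mk E.F v hv}) →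
      l ⊆ pcl 𝓛 (m₁ ∪ m₂) → U ≤ (U₁ ⊔ U₂) := by
    intro l U hlL hU2 himg hlsub
    obtain ⟨s, t, hst, hs, ht⟩ := hp.1 l hlL
    obtain ⟨ws, hws0, hws3, hfs⟩ := hpclX (hlsub hs)
    obtain ⟨wt, hwt0, hwt3, hft⟩ := hpclX (hlsub ht)
    obtain ⟨vs, hvs0, hvsU, hfs'⟩ := getrep l U himg s hs
    obtain ⟨vt, hvt0, hvtU, hft'⟩ := getrep l U himg t ht
    have hwsU : ws ∈ U := transfer U vs ws hvs0 hws0 hvsU (by rw [← hfs, hfs'])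
    have hwtU : wt ∈ U := transfer U vt wt hvt0 hwt0 hvtU (by rw [← hft, hft'])
    have hspan : span E.F {ws, wt} = U :=
      span2 l U hlL hU2 himg s hs t ht hst ws wt hws0 hwt0 hwsU hwtU hfs hft
    rw [← hspan, span_le]
    rintro v (rfl | rfl)
    · exact hws3
    · exact hwt3
  have hUl₁3 : Ul₁ ≤ (U₁ ⊔ U₂) := key l₁ Ul₁ hl₁ hUl₁2 himgl₁ h1
  have hUl₂3 : Ul₂ ≤ (U₁ ⊔ U₂) := key l₂ Ul₂ hl₂ hUl₂2 himgl₂ h2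
  -- dimension count: the two 2-dim subspaces meet nontrivially inside (U₁ ⊔ U₂)
  have hsup3 : finrank E.F ↥(Ul₁ ⊔ Ul₂) ≤ 3 :=
    le_trans (Submodule.finrank_mono (sup_le hUl₁3 hUl₂3)) htop3
  have hsum := Submodule.finrank_sup_add_finrank_inf_eq Ul₁ Ul₂
  rw [hUl₁2, hUl₂2] at hsum
  have hinfpos : 0 < finrank E.F ↥(Ul₁ ⊓ Ul₂) := by omega
  haveI : FiniteDimensional E.F ↥(Ul₁ ⊓ Ul₂) :=
    Submodule.finiteDimensional_of_le (inf_le_left (b := Ul₂))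
  obtain ⟨x, hxmem, hx0⟩ : ∃ x ∈ Ul₁ ⊓ Ul₂, x ≠ 0 := by
    rw [Module.finrank_pos_iff] at hinfpos
    obtain ⟨⟨x, hx⟩, ⟨y, hy⟩, hne'⟩ := hinfpos
    rcases eq_or_ne x 0 with rfl | h0
    · exact ⟨y, hy, fun h => hne' (by simp [Subtype.ext_iff, h])⟩
    · exact ⟨x, hx, h0⟩
  have hP₁ : Projectivization.mk E.F x hx0 ∈ E.f '' l₁ := by
    rw [himgl₁]; exact ⟨x, hx0, hxmem.1, rfl⟩
  have hP₂ : Projectivization.mk E.F x hx0 ∈ E.f '' l₂ := by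
    rw [himgl₂]; exact ⟨x, hx0, hxmem.2, rfl⟩
  obtain ⟨s₁, hs₁, hfs₁⟩ := hP₁
  obtain ⟨s₂, hs₂, hfs₂⟩ := hP₂
  have : s₁ = s₂ := E.inj (by rw [hfs₁, hfs₂])
  exact ⟨s₁, hs₁, this ▸ hs₂⟩

end Emb
section Grand

variable {α : Type*}

/-- Abstract collinearity from a family of "lines". -/
def MRel (𝓜 : Set (Set α)) (x y : α) : Prop := x = y ∨ ∃ Λ ∈ 𝓜, x ∈ Λ ∧ y ∈ Λ

lemma mrel_refl (𝓜 : Set (Set α)) (x : α) : MRel 𝓜 x x := Or.inl rfl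

lemma mrel_symm {𝓜 : Set (Set α)} {x y : α} (h : MRel 𝓜 x y) : MRel 𝓜 y x := by
  rcases h with h | ⟨Λ, hΛ, hx, hy⟩
  · exact Or.inl h.symm
  · exact Or.inr ⟨Λ, hΛ, hy, hx⟩

lemma mrel_of_mem {𝓜 : Set (Set α)} {Λ : Set α} (hΛ : Λ ∈ 𝓜) {x y : α}
    (hx : x ∈ Λ) (hy : y ∈ Λ) : MRel 𝓜 x y := Or.inr ⟨Λ, hΛ, hx, hy⟩

/-- The adjacency graph on points outside a "subspace" `W₀`. -/
def GEdge (𝓜 : Set (Set α)) (P₀ W₀ : Set α) (x y : α) : Prop :=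
  MRel 𝓜 x y ∧ x ≠ y ∧ (x ∈ P₀ ∧ x ∉ W₀) ∧ (y ∈ P₀ ∧ y ∉ W₀)

/-- The Grand connectivity lemma: in a thick one-or-all geometry with no
radical point, the complement of any subspace is connected. -/
lemma grand (𝓜 : Set (Set α)) (P₀ W₀ : Set α)
    (hlines_sub : ∀ Λ ∈ 𝓜, Λ ⊆ P₀)
    (hthick : ∀ Λ ∈ 𝓜, ∀ x y : α, ∃ z ∈ Λ, z ≠ x ∧ z ≠ y)
    (hB7 : ∀ Λ ∈ 𝓜, ∀ x ∈ P₀, ∃ z ∈ Λ, MRel 𝓜 x z)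
    (hB2 : ∀ Λ ∈ 𝓜, ∀ x ∈ P₀, ∀ c d : α, c ∈ Λ → d ∈ Λ → c ≠ d →
        MRel 𝓜 x c → MRel 𝓜 x d → ∀ e ∈ Λ, MRel 𝓜 x e)
    (hWsub : ∀ Λ ∈ 𝓜, ∀ c d : α, c ∈ Λ → d ∈ Λ → c ≠ d → c ∈ W₀ → d ∈ W₀ → Λ ⊆ W₀)
    (hnondeg : ∀ x ∈ P₀, ∃ z ∈ P₀, ¬ MRel 𝓜 x z)
    {p q : α} (hpP : p ∈ P₀) (hpW : p ∉ W₀) (hqP : q ∈ P₀) (hqW : q ∉ W₀)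
    (hponline : ∃ Λ ∈ 𝓜, p ∈ Λ) :
    Relation.ReflTransGen (GEdge 𝓜 P₀ W₀) p q := by
  by_contra hcon
  set C : Set α := {t | Relation.ReflTransGen (GEdge 𝓜 P₀ W₀) p t} with hCdef
  have hpC : p ∈ C := Relation.ReflTransGen.refl
  have hqC : q ∉ C := hcon
  have hCmem : ∀ t ∈ C, t ∈ P₀ ∧ t ∉ W₀ := by
    intro t ht
    induction ht with
    | refl => exact ⟨hpP, hpW⟩
    | tail _ h2 _ => exact h2.2.2.2
  have hsep : ∀ t, t ∈ C → ∀ t', t' ∈ P₀ → t' ∉ W₀ → t' ∉ C → ¬ MRel 𝓜 t t' := by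
    intro t htC t' ht'P ht'W ht'C hrel
    rcases eq_or_ne t t' with rfl | hne
    · exact ht'C htC
    · exact ht'C (Relation.ReflTransGen.tail htC ⟨hrel, hne, hCmem t htC, ⟨ht'P, ht'W⟩⟩)
  have hT : ∀ t, t ∈ C → ∀ t', t' ∈ P₀ → t' ∉ W₀ → t' ∉ C →
      ∀ c, c ∈ P₀ → MRel 𝓜 c t → MRel 𝓜 c t' → c ∈ W₀ := by
    intro t htC t' ht'P ht'W ht'C c hcP hct hct'
    by_contra hcW
    rcases eq_or_ne c t with rfl | hct_ne
    · exact hsep c htC t' ht'P ht'W ht'C hct'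
    · have hcC : c ∈ C :=
        Relation.ReflTransGen.tail htC ⟨mrel_symm hct, Ne.symm hct_ne, hCmem t htC, ⟨hcP, hcW⟩⟩
      exact hsep c hcC t' ht'P ht'W ht'C hct'
  obtain ⟨Λ, hΛ, hpΛ⟩ := hponline
  obtain ⟨s, hsΛ, hqs⟩ := hB7 Λ hΛ q hqP
  have hsP : s ∈ P₀ := hlines_sub Λ hΛ hsΛ
  have hps : MRel 𝓜 p s := mrel_of_mem hΛ hpΛ hsΛ
  have hsW : s ∈ W₀ := hT p hpC q hqP hqW hqC s hsP (mrel_symm hps) (mrel_symm hqs)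
  have hsq_ne : s ≠ q := fun h => hqW (h ▸ hsW)
  have hΛW : ∀ z ∈ Λ, z ∈ W₀ → z = s := by
    intro z hz hzW
    by_contra hne
    exact hpW (hWsub Λ hΛ z s hz hsΛ hne hzW hsW hpΛ)
  obtain ⟨M, hM, hqM, hsM⟩ : ∃ M ∈ 𝓜, q ∈ M ∧ s ∈ M := by
    rcases hqs with h | ⟨M, hM, h1, h2⟩
    · exact absurd h.symm hsq_ne
    · exact ⟨M, hM, h1, h2⟩
  have hMW : ∀ z ∈ M, z ∈ W₀ → z = s := by
    intro z hz hzW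
    by_contra hne
    exact hqW (hWsub M hM z s hz hsM hne hzW hsW hqM)
  have hU : ∀ t, t ∈ P₀ → t ∉ W₀ → MRel 𝓜 s t := by
    intro t htP htW
    by_cases htC : t ∈ C
    · obtain ⟨z, hzM, htz⟩ := hB7 M hM t htP
      have hzW : z ∈ W₀ := hT t htC q hqP hqW hqC z (hlines_sub M hM hzM)
        (mrel_symm htz) (mrel_of_mem hM hzM hqM)
      have hz : z = s := hMW z hzM hzW
      exact mrel_symm (hz ▸ htz)
    · obtain ⟨z, hzΛ, htz⟩ := hB7 Λ hΛ t htP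
      have hzW : z ∈ W₀ := hT p hpC t htP htW htC z (hlines_sub Λ hΛ hzΛ)
        (mrel_of_mem hΛ hzΛ hpΛ) (mrel_symm htz)
      have hz : z = s := hΛW z hzΛ hzW
      exact mrel_symm (hz ▸ htz)
  have hV : ∀ ρ ∈ P₀, MRel 𝓜 s ρ := by
    intro ρ hρP
    by_cases hρW : ρ ∈ W₀
    swap
    · exact hU ρ hρP hρW
    obtain ⟨z, hzΛ, hρz⟩ := hB7 Λ hΛ ρ hρP
    by_cases hzs : z = s
    · exact mrel_symm (hzs ▸ hρz)
    · have hzW : z ∉ W₀ := fun h => hzs (hΛW z hzΛ h)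
      have hzρ : ρ ≠ z := fun h => hzW (h ▸ hρW)
      obtain ⟨N, hN, hρN, hzN⟩ : ∃ N ∈ 𝓜, ρ ∈ N ∧ z ∈ N := by
        rcases hρz with h | ⟨N, hN, h1, h2⟩
        · exact absurd h hzρ
        · exact ⟨N, hN, h1, h2⟩
      obtain ⟨τ, hτN, hτz, hτρ⟩ := hthick N hN z ρ
      have hτW : τ ∉ W₀ := by
        intro hτW₀
        exact hzW (hWsub N hN τ ρ hτN hρN hτρ hτW₀ hρW hzN)
      have h1 : MRel 𝓜 s z := hU z (hlines_sub N hN hzN) hzW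
      have h2 : MRel 𝓜 s τ := hU τ (hlines_sub N hN hτN) hτW
      exact hB2 N hN s hsP z τ hzN hτN (Ne.symm hτz) h1 h2 ρ hρN
  obtain ⟨z0, hz0P, hz0⟩ := hnondeg s hsP
  exact hz0 (hV z0 hz0P)

end Grand
section Ambient

variable {𝓛 : Set (Set S)}

lemma mrel_eq_collin (𝓛 : Set (Set S)) : MRel 𝓛 = Collin 𝓛 := rfl

/-- Connectivity of the complement of any subspace of the ambient polar space. -/
lemma grand_ambient (hp : IsPLS 𝓛) (hoa : OneOrAll 𝓛) (hthick : Thick 𝓛)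
    (hnd : Nondegenerate 𝓛) (hrank : RankAtLeast 𝓛 3) {W₀ : Set S}
    (hW₀ : IsSubspace 𝓛 W₀) {p q : S} (hpW : p ∉ W₀) (hqW : q ∉ W₀) :
    Relation.ReflTransGen (GEdge 𝓛 Set.univ W₀) p q := by
  refine grand 𝓛 Set.univ W₀ (fun Λ _ => Set.subset_univ _)
    (fun Λ hΛ x y => line_third hthick hΛ x y)
    (fun Λ hΛ x _ => ?_) (fun Λ hΛ x _ c d hc hd hcd hxc hxd => ?_)
    (fun Λ hΛ c d hc hd hcd hcW hdW => ?_) (fun x _ => ?_)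
    (Set.mem_univ p) hpW (Set.mem_univ q) hqW ?_
  · exact exists_collin_on_line hp hoa hΛ x
  · exact fun e he => collin_line_all hoa hΛ hc hd hcd hxc hxd e he
  · exact hW₀ Λ hΛ ⟨c, ⟨hc, hcW⟩, d, ⟨hd, hdW⟩, hcd⟩
  · obtain ⟨z, hz⟩ := hnd x
    exact ⟨z, Set.mem_univ z, hz⟩
  · obtain ⟨l, hl, hpl⟩ := every_pt_on_line hp hoa hrank p
    exact ⟨l, hl, hpl⟩

/-- Maximality of hyperplanes: a subspace strictly containing a subspace
that meets every line is everything. -/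
lemma hyperplane_max (hp : IsPLS 𝓛) (hoa : OneOrAll 𝓛) (hthick : Thick 𝓛)
    (hnd : Nondegenerate 𝓛) (hrank : RankAtLeast 𝓛 3) {Y X : Set S}
    (hYsub : IsSubspace 𝓛 Y) (hYmeet : ∀ l ∈ 𝓛, (l ∩ Y).Nonempty)
    (hXsub : IsSubspace 𝓛 X) (hYX : Y ⊆ X) {t : S} (htX : t ∈ X) (htY : t ∉ Y) :
    ∀ s : S, s ∈ X := by
  intro s
  by_cases hsY : s ∈ Y
  · exact hYX hsY
  have hpath := grand_ambient hp hoa hthick hnd hrank hYsub hsY htY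
  refine Relation.ReflTransGen.head_induction_on hpath htX ?_
  intro x c hedge _ hcX
  obtain ⟨hrel, hne, ⟨_, hxY⟩, ⟨_, hcY⟩⟩ := hedge
  obtain ⟨l, hl, hxl, hcl⟩ := line_exists hrel hne
  obtain ⟨w, hwl, hwY⟩ := hYmeet l hl
  have hwc : w ≠ c := fun h => hcY (h ▸ hwY)
  exact hXsub l hl ⟨w, ⟨hwl, hYX hwY⟩, c, ⟨hcl, hcX⟩, hwc⟩ hxl

/-- No nested perps: if the perp of `a` is contained in the perp of `u ≠ a`,
we get a contradiction. -/
lemma npl (hp : IsPLS 𝓛) (hoa : OneOrAll 𝓛) (hthick : Thick 𝓛)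
    (hnd : Nondegenerate 𝓛) (hrank : RankAtLeast 𝓛 3) {a u : S} (hne : a ≠ u)
    (hco : Collin 𝓛 a u) (hsubset : ∀ v, Collin 𝓛 a v → Collin 𝓛 u v) : False := by
  have hYmeet : ∀ l ∈ 𝓛, (l ∩ perp 𝓛 a).Nonempty := by
    intro l hl
    obtain ⟨z, hz, hcz⟩ := exists_collin_on_line hp hoa hl a
    exact ⟨z, hz, hcz⟩
  have hperpmax : ∀ w : S, (∀ v, Collin 𝓛 a v → Collin 𝓛 w v) →
      (∀ v, Collin 𝓛 w v → Collin 𝓛 a v) := by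
    intro w hw
    by_cases hex : ∃ t, Collin 𝓛 w t ∧ ¬ Collin 𝓛 a t
    · exfalso
      obtain ⟨t, htw, hta⟩ := hex
      obtain ⟨zw, hzw⟩ := hnd w
      exact hzw (hyperplane_max hp hoa hthick hnd hrank (perp_subspace hoa a) hYmeet
        (perp_subspace hoa w) (fun v hv => hw v hv) htw hta zw)
    · push_neg at hex
      exact hex
  obtain ⟨z, hz⟩ := hnd a
  obtain ⟨m, hm, ham, hum⟩ := line_exists hco hne
  obtain ⟨w, hwm, hzw⟩ := exists_collin_on_line hp hoa hm z
  have hwa : w ≠ a := fun h => hz (collin_symm (h ▸ hzw))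
  have hwnested : ∀ v, Collin 𝓛 a v → Collin 𝓛 w v := by
    intro v hv
    have huv : Collin 𝓛 u v := hsubset v hv
    have : ∀ e ∈ m, Collin 𝓛 v e :=
      collin_line_all hoa hm ham hum hne (collin_symm hv) (collin_symm huv)
    exact collin_symm (this w hwm)
  have := hperpmax w hwnested z (collin_symm hzw)
  exact hz this

end Ambient
section Residue

variable {𝓛 : Set (Set S)}

/-- Vertices of the residue at `a` : the lines through `a`. -/
def Vtx (𝓛 : Set (Set S)) (a : S) : Set (Set S) := {m | m ∈ 𝓛 ∧ a ∈ m}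

/-- Lines of the residue at `a` : vertex-sets of planes through `a`. -/
def ResLines (𝓛 : Set (Set S)) (a : S) : Set (Set (Set S)) :=
  {Λ | ∃ m₁ m₂ : Set S, m₁ ∈ Vtx 𝓛 a ∧ m₂ ∈ Vtx 𝓛 a ∧ m₁ ≠ m₂ ∧
    (∀ u ∈ m₁, ∀ v ∈ m₂, Collin 𝓛 u v) ∧
    Λ = {n | n ∈ Vtx 𝓛 a ∧ n ⊆ pcl 𝓛 (m₁ ∪ m₂)}}

lemma adjpair_singular {m₁ m₂ : Set S} (hm₁ : m₁ ∈ 𝓛) (hm₂ : m₂ ∈ 𝓛)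
    (hadj : ∀ u ∈ m₁, ∀ v ∈ m₂, Collin 𝓛 u v) : SingularSet 𝓛 (m₁ ∪ m₂) := by
  rintro u (hu | hu) v (hv | hv)
  · exact collin_of_mem hm₁ hu hv
  · exact hadj u hu v hv
  · exact collin_symm (hadj v hv u hu)
  · exact collin_of_mem hm₂ hu hv

lemma vtx_inter {a : S} (hp : IsPLS 𝓛) {m₁ m₂ : Set S} (hm₁ : m₁ ∈ Vtx 𝓛 a)
    (hm₂ : m₂ ∈ Vtx 𝓛 a) (hne : m₁ ≠ m₂) {v : S} (hv₁ : v ∈ m₁) (hv₂ : v ∈ m₂) :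
    v = a := by
  by_contra hva
  exact hne (line_unique hp hm₁.1 hm₂.1 hva hv₁ hv₂ hm₁.2 hm₂.2)

lemma mrel_res_of_adj {a : S} {x z : Set S} (hx : x ∈ Vtx 𝓛 a)
    (hz : z ∈ Vtx 𝓛 a) (hadj : ∀ u ∈ x, ∀ v ∈ z, Collin 𝓛 u v) :
    MRel (ResLines 𝓛 a) x z := by
  rcases eq_or_ne x z with rfl | hne
  · exact mrel_refl _ _
  · exact Or.inr ⟨{n | n ∈ Vtx 𝓛 a ∧ n ⊆ pcl 𝓛 (x ∪ z)}, ⟨x, z, hx, hz, hne, hadj, rfl⟩,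
      ⟨hx, fun t ht => subset_pcl _ (Or.inl ht)⟩, ⟨hz, fun t ht => subset_pcl _ (Or.inr ht)⟩⟩

lemma adj_of_mrel (hoa : OneOrAll 𝓛) {a : S} {x c : Set S} (hx : x ∈ 𝓛)
    (h : MRel (ResLines 𝓛 a) x c) : ∀ u ∈ x, ∀ v ∈ c, Collin 𝓛 u v := by
  rcases h with rfl | ⟨Λ, ⟨m₁, m₂, hm₁, hm₂, hne, hadj, rfl⟩, hxΛ, hcΛ⟩
  · exact fun u hu v hv => collin_of_mem hx hu hv
  · have hsing : SingularSet 𝓛 (pcl 𝓛 (m₁ ∪ m₂)) :=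
      pcl_singular hoa (adjpair_singular hm₁.1 hm₂.1 hadj)
    exact fun u hu v hv => hsing u (hxΛ.2 hu) v (hcΛ.2 hv)

lemma res_lines_sub {a : S} : ∀ Λ ∈ ResLines 𝓛 a, Λ ⊆ Vtx 𝓛 a := by
  rintro Λ ⟨m₁, m₂, _, _, _, _, rfl⟩ n hn
  exact hn.1

/-- Three distinct vertices on each residue line. -/
lemma res_thick (hp : IsPLS 𝓛) (hoa : OneOrAll 𝓛) (hthick : Thick 𝓛) {a : S} :
    ∀ Λ ∈ ResLines 𝓛 a, ∀ x y : Set S, ∃ z ∈ Λ, z ≠ x ∧ z ≠ y := by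
  rintro Λ ⟨m₁, m₂, hm₁, hm₂, hne, hadj, rfl⟩ x y
  have hsing : SingularSet 𝓛 (pcl 𝓛 (m₁ ∪ m₂)) :=
    pcl_singular hoa (adjpair_singular hm₁.1 hm₂.1 hadj)
  have hsub : IsSubspace 𝓛 (pcl 𝓛 (m₁ ∪ m₂)) := pcl_subspace _
  have hm₁π : m₁ ⊆ pcl 𝓛 (m₁ ∪ m₂) := fun t ht => subset_pcl _ (Or.inl ht)
  have hm₂π : m₂ ⊆ pcl 𝓛 (m₁ ∪ m₂) := fun t ht => subset_pcl _ (Or.inr ht)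
  -- build a third vertex
  obtain ⟨v, hv, hva⟩ := exists_ne_on_line hp hm₁.1 a
  obtain ⟨u₂, hu₂, hu₂a⟩ := exists_ne_on_line hp hm₂.1 a
  have hvu₂ : v ≠ u₂ := fun h => hva (vtx_inter hp hm₁ hm₂ hne hv (h ▸ hu₂))
  obtain ⟨ℓ, hℓ, hvℓ, hu₂ℓ⟩ := line_exists (hadj v hv u₂ hu₂) hvu₂
  have hℓπ : ℓ ⊆ pcl 𝓛 (m₁ ∪ m₂) :=
    hsub ℓ hℓ ⟨v, ⟨hvℓ, hm₁π hv⟩, u₂, ⟨hu₂ℓ, hm₂π hu₂⟩, hvu₂⟩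
  have haℓ : a ∉ ℓ := by
    intro haℓ
    have : ℓ = m₁ := line_unique hp hℓ hm₁.1 (Ne.symm hva) haℓ hm₁.2 hvℓ hv
    exact hu₂a (vtx_inter hp hm₁ hm₂ hne (this ▸ hu₂ℓ) hu₂)
  obtain ⟨w, hwℓ, hwv, hwu₂⟩ := line_third hthick hℓ v u₂
  have hwa : w ≠ a := fun h => haℓ (h ▸ hwℓ)
  have haw : Collin 𝓛 a w :=
    collin_line_all hoa hℓ hvℓ hu₂ℓ hvu₂ (collin_of_mem hm₁.1 hm₁.2 hv)
      (collin_of_mem hm₂.1 hm₂.2 hu₂) w hwℓ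
  obtain ⟨z₃, hz₃, haz₃, hwz₃⟩ := line_exists haw (Ne.symm hwa)
  have hz₃π : z₃ ⊆ pcl 𝓛 (m₁ ∪ m₂) :=
    hsub z₃ hz₃ ⟨a, ⟨haz₃, hm₁π hm₁.2⟩, w, ⟨hwz₃, hℓπ hwℓ⟩, Ne.symm hwa⟩
  have hz₃m₁ : z₃ ≠ m₁ := by
    intro h
    have hwm₁ : w ∈ m₁ := h ▸ hwz₃
    have : ℓ = m₁ := line_unique hp hℓ hm₁.1 hwv hwℓ hwm₁ hvℓ hv
    exact hu₂a (vtx_inter hp hm₁ hm₂ hne (this ▸ hu₂ℓ) hu₂)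
  have hz₃m₂ : z₃ ≠ m₂ := by
    intro h
    have hwm₂ : w ∈ m₂ := h ▸ hwz₃
    have : ℓ = m₂ := line_unique hp hℓ hm₂.1 hwu₂ hwℓ hwm₂ hu₂ℓ hu₂
    exact hva (vtx_inter hp hm₁ hm₂ hne hv (this ▸ hvℓ))
  -- pigeonhole among m₁ m₂ z₃
  have h3 : ∀ x y : Set S, ∃ z, (z ∈ Vtx 𝓛 a ∧ z ⊆ pcl 𝓛 (m₁ ∪ m₂)) ∧ z ≠ x ∧ z ≠ y := by
    intro x y
    by_cases h1x : m₁ = x <;> by_cases h1y : m₁ = y <;>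
      by_cases h2x : m₂ = x <;> by_cases h2y : m₂ = y <;>
      first
        | exact ⟨m₁, ⟨hm₁, hm₁π⟩, h1x, h1y⟩
        | exact ⟨m₂, ⟨hm₂, hm₂π⟩, h2x, h2y⟩
        | (refine ⟨z₃, ⟨⟨hz₃, haz₃⟩, hz₃π⟩, ?_, ?_⟩ <;> (intro h; subst h; simp_all))
  exact h3 x y

/-- Residue B7, via Lemma E. -/
lemma res_B7 (hp : IsPLS 𝓛) (hoa : OneOrAll 𝓛) {a : S} :
    ∀ Λ ∈ ResLines 𝓛 a, ∀ x ∈ Vtx 𝓛 a, ∃ z ∈ Λ, MRel (ResLines 𝓛 a) x z := by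
  rintro Λ ⟨m₁, m₂, hm₁, hm₂, hne, hadj, rfl⟩ x hx
  have hsing : SingularSet 𝓛 (pcl 𝓛 (m₁ ∪ m₂)) :=
    pcl_singular hoa (adjpair_singular hm₁.1 hm₂.1 hadj)
  have hsub : IsSubspace 𝓛 (pcl 𝓛 (m₁ ∪ m₂)) := pcl_subspace _
  have hm₁π : m₁ ⊆ pcl 𝓛 (m₁ ∪ m₂) := fun t ht => subset_pcl _ (Or.inl ht)
  have hm₂π : m₂ ⊆ pcl 𝓛 (m₁ ∪ m₂) := fun t ht => subset_pcl _ (Or.inr ht)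
  obtain ⟨x₀, hx₀, hx₀a⟩ := exists_ne_on_line hp hx.1 a
  obtain ⟨u₂, hu₂, hu₂a⟩ := exists_ne_on_line hp hm₂.1 a
  have hu₂m₁ : u₂ ∉ m₁ := fun h => hu₂a (vtx_inter hp hm₁ hm₂ hne h hu₂)
  obtain ⟨n, hn, hnπ, hnx₀⟩ :=
    lemmaE hp hoa hsing hsub hm₁.1 hm₁π (hm₂π hu₂) hu₂m₁ x₀
  -- produce a vertex inside the plane all of whose points are collinear with x₀
  obtain ⟨z, hzV, hzπ, hzx₀⟩ :
      ∃ z, z ∈ Vtx 𝓛 a ∧ z ⊆ pcl 𝓛 (m₁ ∪ m₂) ∧ ∀ e ∈ z, Collin 𝓛 x₀ e := by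
    by_cases han : a ∈ n
    · exact ⟨n, ⟨hn, han⟩, hnπ, hnx₀⟩
    · obtain ⟨v₀, w₀, hvw, hv₀, hw₀⟩ := hp.1 n hn
      have hv₀a : v₀ ≠ a := fun h => han (h ▸ hv₀)
      have hav₀ : Collin 𝓛 a v₀ := hsing a (hm₁π hm₁.2) v₀ (hnπ hv₀)
      obtain ⟨z, hz, haz, hv₀z⟩ := line_exists hav₀ (Ne.symm hv₀a)
      refine ⟨z, ⟨hz, haz⟩, hsub z hz ⟨a, ⟨haz, hm₁π hm₁.2⟩, v₀, ⟨hv₀z, hnπ hv₀⟩,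
        Ne.symm hv₀a⟩, ?_⟩
      exact collin_line_all hoa hz haz hv₀z (Ne.symm hv₀a)
        (collin_of_mem hx.1 hx₀ hx.2) (hnx₀ v₀ hv₀)
  refine ⟨z, ⟨hzV, hzπ⟩, mrel_res_of_adj hx hzV ?_⟩
  intro u hu v hv
  have h1 : Collin 𝓛 v a := collin_of_mem hzV.1 hv hzV.2
  have h2 : Collin 𝓛 v x₀ := collin_symm (hzx₀ v hv)
  exact collin_symm (collin_line_all hoa hx.1 hx.2 hx₀ (Ne.symm hx₀a) h1 h2 u hu)

/-- Residue B2 (two-or-all), via the embedding. -/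
lemma res_B2 (hp : IsPLS 𝓛) (hoa : OneOrAll 𝓛) (hemb : Embeddable 𝓛) {a : S} :
    ∀ Λ ∈ ResLines 𝓛 a, ∀ x ∈ Vtx 𝓛 a, ∀ c d : Set S, c ∈ Λ → d ∈ Λ → c ≠ d →
      MRel (ResLines 𝓛 a) x c → MRel (ResLines 𝓛 a) x d →
      ∀ e ∈ Λ, MRel (ResLines 𝓛 a) x e := by
  rintro Λ ⟨m₁, m₂, hm₁, hm₂, hne, hadj, rfl⟩ x hx c d hcΛ hdΛ hcd hxc hxd e heΛ
  have hsing : SingularSet 𝓛 (pcl 𝓛 (m₁ ∪ m₂)) :=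
    pcl_singular hoa (adjpair_singular hm₁.1 hm₂.1 hadj)
  have hsub : IsSubspace 𝓛 (pcl 𝓛 (m₁ ∪ m₂)) := pcl_subspace _
  by_cases hxπ : x ⊆ pcl 𝓛 (m₁ ∪ m₂)
  · exact mrel_res_of_adj hx heΛ.1 (fun u hu v hv => hsing u (hxπ hu) v (heΛ.2 hv))
  · have hadjc : ∀ u ∈ x, ∀ v ∈ c, Collin 𝓛 u v := adj_of_mrel hoa hx.1 hxc
    have hadjd : ∀ u ∈ x, ∀ v ∈ d, Collin 𝓛 u v := adj_of_mrel hoa hx.1 hxd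
    obtain ⟨v₁, hv₁, hv₁a⟩ := exists_ne_on_line hp hcΛ.1.1 a
    have hv₁d : v₁ ∉ d := fun h => hv₁a (vtx_inter hp hcΛ.1 hdΛ.1 hcd hv₁ h)
    have hπ : ∀ u ∈ x, ∀ t ∈ pcl 𝓛 (m₁ ∪ m₂), Collin 𝓛 u t := by
      intro u hu t ht
      by_cases htd : t ∈ d
      · exact hadjd u hu t htd
      by_cases htv₁ : t = v₁
      · exact htv₁ ▸ hadjc u hu v₁ hv₁
      have htcol : Collin 𝓛 t v₁ := hsing t ht v₁ (hcΛ.2 hv₁)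
      obtain ⟨ℓ, hℓ, htℓ, hv₁ℓ⟩ := line_exists htcol htv₁
      have hℓπ : ℓ ⊆ pcl 𝓛 (m₁ ∪ m₂) :=
        hsub ℓ hℓ ⟨t, ⟨htℓ, ht⟩, v₁, ⟨hv₁ℓ, hcΛ.2 hv₁⟩, htv₁⟩
      have hℓd : ℓ ≠ d := fun h => htd (h ▸ htℓ)
      obtain ⟨r, hrℓ, hrd⟩ := lines_meet hemb hp hm₁.1 hm₂.1 hm₁.2 hm₂.2 hℓ hdΛ.1.1
        hℓd hℓπ (fun z hz => hdΛ.2 hz)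
      have hrv₁ : r ≠ v₁ := fun h => hv₁d (h ▸ hrd)
      exact collin_line_all hoa hℓ hrℓ hv₁ℓ hrv₁ (hadjd u hu r hrd)
        (hadjc u hu v₁ hv₁) t htℓ
    refine mrel_res_of_adj hx heΛ.1 ?_
    intro u hu v hv
    exact hπ u hu v (heΛ.2 hv)

/-- Residue: the lines through `a` inside a subspace `Y` form a residue subspace. -/
lemma res_Wsub (hp : IsPLS 𝓛) (hoa : OneOrAll 𝓛) (hemb : Embeddable 𝓛) {a : S}
    {Y : Set S} (hYsub : IsSubspace 𝓛 Y) :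
    ∀ Λ ∈ ResLines 𝓛 a, ∀ c d : Set S, c ∈ Λ → d ∈ Λ → c ≠ d →
      c ∈ {m | m ∈ Vtx 𝓛 a ∧ m ⊆ Y} → d ∈ {m | m ∈ Vtx 𝓛 a ∧ m ⊆ Y} →
      Λ ⊆ {m | m ∈ Vtx 𝓛 a ∧ m ⊆ Y} := by
  rintro Λ ⟨m₁, m₂, hm₁, hm₂, hne, hadj, rfl⟩ c d hcΛ hdΛ hcd hcY hdY n hnΛ
  refine ⟨hnΛ.1, ?_⟩
  have hsing : SingularSet 𝓛 (pcl 𝓛 (m₁ ∪ m₂)) :=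
    pcl_singular hoa (adjpair_singular hm₁.1 hm₂.1 hadj)
  have hsub : IsSubspace 𝓛 (pcl 𝓛 (m₁ ∪ m₂)) := pcl_subspace _
  intro t ht
  have htπ : t ∈ pcl 𝓛 (m₁ ∪ m₂) := hnΛ.2 ht
  by_cases htd : t ∈ d
  · exact hdY.2 htd
  obtain ⟨v₁, hv₁, hv₁a⟩ := exists_ne_on_line hp hcΛ.1.1 a
  have hv₁d : v₁ ∉ d := fun h => hv₁a (vtx_inter hp hcΛ.1 hdΛ.1 hcd hv₁ h)
  by_cases htv₁ : t = v₁
  · exact htv₁ ▸ hcY.2 hv₁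
  have htcol : Collin 𝓛 t v₁ := hsing t htπ v₁ (hcΛ.2 hv₁)
  obtain ⟨ℓ, hℓ, htℓ, hv₁ℓ⟩ := line_exists htcol htv₁
  have hℓπ : ℓ ⊆ pcl 𝓛 (m₁ ∪ m₂) :=
    hsub ℓ hℓ ⟨t, ⟨htℓ, htπ⟩, v₁, ⟨hv₁ℓ, hcΛ.2 hv₁⟩, htv₁⟩
  have hℓd : ℓ ≠ d := fun h => htd (h ▸ htℓ)
  obtain ⟨r, hrℓ, hrd⟩ := lines_meet hemb hp hm₁.1 hm₂.1 hm₁.2 hm₂.2 hℓ hdΛ.1.1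
    hℓd hℓπ (fun z hz => hdΛ.2 hz)
  have hrv₁ : r ≠ v₁ := fun h => hv₁d (h ▸ hrd)
  exact hYsub ℓ hℓ ⟨r, ⟨hrℓ, hdY.2 hrd⟩, v₁, ⟨hv₁ℓ, hcY.2 hv₁⟩, hrv₁⟩ htℓ

/-- Residue nondegeneracy, from absence of nested perps. -/
lemma res_nondeg (hp : IsPLS 𝓛) (hoa : OneOrAll 𝓛) (hthick : Thick 𝓛)
    (hnd : Nondegenerate 𝓛) (hrank : RankAtLeast 𝓛 3) {a : S} :
    ∀ x ∈ Vtx 𝓛 a, ∃ z ∈ Vtx 𝓛 a, ¬ MRel (ResLines 𝓛 a) x z := by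
  intro x hx
  by_contra hconn
  push_neg at hconn
  obtain ⟨u, hu, hua⟩ := exists_ne_on_line hp hx.1 a
  refine npl hp hoa hthick hnd hrank (Ne.symm hua) (collin_of_mem hx.1 hx.2 hu) ?_
  intro v hav
  rcases eq_or_ne a v with rfl | hva
  · exact collin_of_mem hx.1 hu hx.2
  obtain ⟨z, hz, haz, hvz⟩ := line_exists hav hva
  have hrel := hconn z ⟨hz, haz⟩
  exact adj_of_mrel hoa hx.1 hrel u hu v hvz

/-- Every vertex lies on a residue line. -/
lemma res_on_line (hp : IsPLS 𝓛) (hoa : OneOrAll 𝓛) (hrank : RankAtLeast 𝓛 3) {a : S}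
    {k : Set S} (hk : k ∈ Vtx 𝓛 a) : ∃ Λ ∈ ResLines 𝓛 a, k ∈ Λ := by
  obtain ⟨c, hck, hc⟩ := exists_perp_off_line hp hoa hrank hk.1
  have hca : Collin 𝓛 a c := collin_symm (hc a hk.2)
  have hac : a ≠ c := fun h => hck (h ▸ hk.2)
  obtain ⟨m', hm', ham', hcm'⟩ := line_exists hca hac
  have hm'V : m' ∈ Vtx 𝓛 a := ⟨hm', ham'⟩
  have hkm' : k ≠ m' := fun h => hck (h ▸ hcm')
  have hadj : ∀ u ∈ k, ∀ v ∈ m', Collin 𝓛 u v := by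
    intro u hu v hv
    exact collin_line_all hoa hm' ham' hcm' hac
      (collin_of_mem hk.1 hu hk.2) (collin_symm (hc u hu)) v hv
  exact ⟨{n | n ∈ Vtx 𝓛 a ∧ n ⊆ pcl 𝓛 (k ∪ m')}, ⟨k, m', hk, hm'V, hkm', hadj, rfl⟩,
    ⟨hk, fun t ht => subset_pcl _ (Or.inl ht)⟩⟩

/-- Residue connectivity. -/
lemma grand_res (hp : IsPLS 𝓛) (hoa : OneOrAll 𝓛) (hthick : Thick 𝓛)
    (hnd : Nondegenerate 𝓛) (hrank : RankAtLeast 𝓛 3) (hemb : Embeddable 𝓛)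
    {W : Set S} (hWsub : IsSubspace 𝓛 W) {a : S} {k l : Set S}
    (hk : k ∈ Vtx 𝓛 a) (hl : l ∈ Vtx 𝓛 a) (hkW : ¬ k ⊆ W) (hlW : ¬ l ⊆ W) :
    Relation.ReflTransGen
      (GEdge (ResLines 𝓛 a) (Vtx 𝓛 a) {m | m ∈ Vtx 𝓛 a ∧ m ⊆ W}) k l := by
  refine grand (ResLines 𝓛 a) (Vtx 𝓛 a) {m | m ∈ Vtx 𝓛 a ∧ m ⊆ W}
    res_lines_sub (res_thick hp hoa hthick) (res_B7 hp hoa)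
    (res_B2 hp hoa hemb) (res_Wsub hp hoa hemb hWsub)
    (res_nondeg hp hoa hthick hnd hrank)
    hk (fun h => hkW h.2) hl (fun h => hlW h.2) (res_on_line hp hoa hrank hk)
end Residue
section Final

variable {𝓛 : Set (Set S)}

lemma edge_plane (hp : IsPLS 𝓛) (hoa : OneOrAll 𝓛) {a : S} {W : Set S} {x y : Set S}
    (hedge : GEdge (ResLines 𝓛 a) (Vtx 𝓛 a) {m | m ∈ Vtx 𝓛 a ∧ m ⊆ W} x y) :
    ∃ π : Set S, IsPlane 𝓛 π ∧ x ⊆ π ∧ y ⊆ π ∧ a ∈ π ∧ ¬ π ⊆ W := by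
  obtain ⟨hrel, hne, ⟨hxV, hxW⟩, ⟨hyV, hyW⟩⟩ := hedge
  have hxnW : ¬ x ⊆ W := fun h => hxW ⟨hxV, h⟩
  rcases hrel with rfl | ⟨Λ, ⟨m₁, m₂, hm₁, hm₂, hnem, hadj, rfl⟩, hxΛ, hyΛ⟩
  · exact absurd rfl hne
  refine ⟨pcl 𝓛 (m₁ ∪ m₂),
    adj_plane hp hoa hm₁.1 hm₂.1 hm₁.2 hm₂.2 hnem hadj,
    hxΛ.2, hyΛ.2, hxΛ.2 hxV.2, fun h => hxnW (hxΛ.2.trans h)⟩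

lemma chain_planes (hp : IsPLS 𝓛) (hoa : OneOrAll 𝓛) {a : S} {W : Set S} {l : Set S} :
    ∀ v : Set S,
    Relation.TransGen
      (GEdge (ResLines 𝓛 a) (Vtx 𝓛 a) {m | m ∈ Vtx 𝓛 a ∧ m ⊆ W}) v l →
    ∃ n : ℕ, ∃ g : ℕ → Set S,
      (∀ i ≤ n, IsPlane 𝓛 (g i) ∧ ¬ g i ⊆ W ∧ a ∈ g i) ∧ v ⊆ g 0 ∧ l ⊆ g n ∧
      ∀ j < n, ∃ M ∈ compLines 𝓛 W, M ⊆ g j \ W ∧ M ⊆ g (j+1) \ W := by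
  intro v htg
  induction htg using Relation.TransGen.head_induction_on with
  | single h =>
    obtain ⟨π, hπ, hvπ, hlπ, haπ, hπW⟩ := edge_plane hp hoa h
    exact ⟨0, fun _ => π, fun i _ => ⟨hπ, hπW, haπ⟩, hvπ, hlπ, fun j hj => absurd hj (by omega)⟩
  | head h htg ih =>
    rename_i v' c
    obtain ⟨n', g', hg'cond, hcg0, hlg, hg'M⟩ := ih
    obtain ⟨π, hπ, hvπ, hcπ, haπ, hπW⟩ := edge_plane hp hoa h
    refine ⟨n' + 1, fun i => if i = 0 then π else g' (i - 1), ?_, ?_, ?_, ?_⟩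
    · intro i hi
      rcases Nat.eq_zero_or_pos i with rfl | hpos
      · simpa using ⟨hπ, hπW, haπ⟩
      · have : i ≠ 0 := by omega
        simpa [this] using hg'cond (i - 1) (by omega)
    · simpa using hvπ
    · have : n' + 1 ≠ 0 := by omega
      simpa [this] using hlg
    · intro j hj
      rcases Nat.eq_zero_or_pos j with rfl | hpos
      · have hcV : c ∈ Vtx 𝓛 a := h.2.2.2.1
        have hcnW : ¬ c ⊆ W := fun hc => h.2.2.2.2 ⟨hcV, hc⟩
        refine ⟨c \ W, ⟨c, hcV.1, hcnW, rfl⟩, ?_, ?_⟩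
        · rintro t ⟨htc, htW⟩
          simpa using ⟨hcπ htc, htW⟩
        · rintro t ⟨htc, htW⟩
          simpa using ⟨hcg0 htc, htW⟩
      · obtain ⟨M, hM, h1, h2⟩ := hg'M (j - 1) (by omega)
        have hj0 : j ≠ 0 := by omega
        have hj1 : j + 1 ≠ 0 := by omega
        have e1 : j - 1 + 1 = j := by omega
        refine ⟨M, hM, ?_, ?_⟩
        · simpa [hj0] using h1
        · rw [e1] at h2
          simpa [hj1] using h2

end Final
theorem statement_6 (𝓛 : Set (Set S)) (hpolar : IsPolarSpace 𝓛) (hthick : Thick 𝓛)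
    (hnd : Nondegenerate 𝓛) (hrank : RankAtLeast 𝓛 3) (hemb : Embeddable 𝓛)
    (W : Set S) (hsub : IsSubspace 𝓛 W) (hproper : W ≠ Set.univ)
    (hhyp : ∃ H : Set S, IsHyperplane 𝓛 H ∧ W ⊆ H)
    (K L : Set S) (hK : K ∈ compLines 𝓛 W) (hL : L ∈ compLines 𝓛 W)
    (hne : K ≠ L) (hpar : Parallel 𝓛 W K L) :
    ∃ a : S, AtInfinity 𝓛 W K a ∧ AtInfinity 𝓛 W L a ∧
      ∃ n : ℕ, ∃ Pl : Fin (n + 1) → Set S,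
        (∀ i, IsPlane 𝓛 (Pl i) ∧ ¬ Pl i ⊆ W ∧ a ∈ Pl i) ∧
        K ⊆ Pl 0 \ W ∧ L ⊆ Pl (Fin.last n) \ W ∧
        ∀ j : Fin n, ∃ M ∈ compLines 𝓛 W,
          M ⊆ Pl j.castSucc \ W ∧ M ⊆ Pl j.succ \ W := by
  obtain ⟨hp, hoa⟩ := hpolar
  obtain ⟨k, hk𝓛, l, hl𝓛, hkW, hlW, hKk, hLl, a, ha⟩ := hpar
  have hak : a ∈ k := ha.1.1
  have hal : a ∈ l := ha.1.2
  have haW : a ∈ W := ha.2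
  subst hKk; subst hLl
  refine ⟨a, ⟨k, hk𝓛, hkW, rfl, hak, haW⟩, ⟨l, hl𝓛, hlW, rfl, hal, haW⟩, ?_⟩
  have hkl : k ≠ l := fun h => hne (by rw [h])
  have hrtg := grand_res hp hoa hthick hnd hrank hemb hsub (a := a)
    ⟨hk𝓛, hak⟩ ⟨hl𝓛, hal⟩ hkW hlW
  have htg : Relation.TransGen
      (GEdge (ResLines 𝓛 a) (Vtx 𝓛 a) {m | m ∈ Vtx 𝓛 a ∧ m ⊆ W}) k l := by
    rcases Relation.reflTransGen_iff_eq_or_transGen.mp hrtg with h | h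
    · exact absurd h.symm hkl
    · exact h
  obtain ⟨n, g, hgcond, hkg0, hlgn, hgM⟩ := chain_planes hp hoa k htg
  refine ⟨n, fun i => g i.val, ?_, ?_, ?_, ?_⟩
  · intro i
    exact hgcond i.val (Nat.lt_succ_iff.mp i.isLt)
  · rintro x ⟨hxk, hxW⟩
    exact ⟨hkg0 hxk, hxW⟩
  · rintro x ⟨hxl, hxW⟩
    exact ⟨hlgn hxl, hxW⟩
  · intro j
    obtain ⟨M, hM, h1, h2⟩ := hgM j.val j.isLt
    exact ⟨M, hM, h1, h2⟩

end PolarComp
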